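/- arXiv:2005.04152 — 3 statements merged into one kernel-verified Lean document; each statement's English description precedes it below -/
import Mathlib

section
/- For every integer N ≥ 1, every ℏ > 0, every Schwartz function a ∈ 𝒮(ℝ) and every z ∈ ℂ, the polynomial ψ^a_z satisfies ψ^a_z = Σ_{n=0}^{N−1} ã((τ(z)−nℏ)/ℏ) · conj(φ_n(z)) · φ_n; equivalently, for every w ∈ ℂ: ∫_ℝ a(t)·e^{iτ(z)t/ℏ}·N·(1+conj(e^{it}z)·w)^(N−1) dt/√(2π) = Σ_{n=0}^{N−1} ã(τ(z)/ℏ − n)·conj(φ_n(z))·φ_n(w). -/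
open MeasureTheory Complex Real

noncomputable section

/-- The basis vectors `φ_n(z) = √(N!/(n!(N−1−n)!))·zⁿ`. -/
def phiN (N n : ℕ) : ℂ → ℂ :=
  fun z => (Real.sqrt ((N.factorial : ℝ) / (n.factorial * (N - 1 - n).factorial)) : ℂ) * z ^ n

/-- The coherent state `ρ_{z₀}(z) = N·(1+conj(z₀)·z)^{N−1}`. -/
def rhoN (N : ℕ) (z₀ : ℂ) : ℂ → ℂ :=
  fun z => (N : ℂ) * (1 + (starRingEnd ℂ) z₀ * z) ^ (N - 1)

/-- The Fourier transform `ã(y) = (2π)^{-1/2} ∫ e^{ixy} a(x) dx`. -/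
def tildeF (a : ℝ → ℂ) (y : ℝ) : ℂ :=
  (Real.sqrt (2 * Real.pi))⁻¹ * ∫ x : ℝ, Complex.exp (Complex.I * x * y) * a x

/-- `τ(z) = |z|²/(1+|z|²)`. -/
def tauS (z : ℂ) : ℝ := ‖z‖ ^ 2 / (1 + ‖z‖ ^ 2)

/-- The building vector `ψ^a_z = ∫ a(t)·e^{iτ(z)t/ℏ}·ρ_{e^{it}z} dt/√(2π)`. -/
def psiA (N : ℕ) (ℏ : ℝ) (a : ℝ → ℂ) (z : ℂ) : ℂ → ℂ :=
  fun w => ∫ t : ℝ, a t * Complex.exp (Complex.I * (tauS z) * t / (ℏ : ℂ)) *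
    rhoN N (Complex.exp (Complex.I * t) * z) w / (Real.sqrt (2 * Real.pi) : ℂ)

lemma integ_aux (a : SchwartzMap ℝ ℂ) (y : ℝ) :
    Integrable (fun t : ℝ => Complex.exp (Complex.I * t * y) * a t) := by
  apply (a.integrable).bdd_mul (c := 1)
  · exact (Complex.continuous_exp.comp (by fun_prop)).aestronglyMeasurable
  · exact Filter.Eventually.of_forall fun t => by simp [Complex.norm_exp]

/-- `ψ^a_z = Σ_{n=0}^{N−1} ã(τ(z)/ℏ − n)·conj(φ_n(z))·φ_n`. -/
theorem stmt4 (N : ℕ) (hN : 1 ≤ N) (ℏ : ℝ) (hℏ : 0 < ℏ) (a : SchwartzMap ℝ ℂ) (z w : ℂ) :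
    psiA N ℏ (⇑a) z w
      = ∑ n ∈ Finset.range N,
          tildeF (⇑a) (tauS z / ℏ - (n : ℝ)) * (starRingEnd ℂ) (phiN N n z) * phiN N n w := by
  have hs : (Real.sqrt (2 * Real.pi) : ℂ) ≠ 0 := by
    simp [Real.sqrt_eq_zero', Real.pi_pos.le]
  set τ := tauS z with hτ
  set s : ℂ := (Real.sqrt (2 * Real.pi) : ℂ)
  set c : ℕ → ℂ := fun n => (N : ℂ) * ((N-1).choose n : ℂ) * ((starRingEnd ℂ) z * w) ^ n with hc
  have key : ∀ t : ℝ, a t * Complex.exp (Complex.I * τ * t / (ℏ : ℂ)) *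
      rhoN N (Complex.exp (Complex.I * t) * z) w / s
      = ∑ n ∈ Finset.range N,
          c n * (Complex.exp (Complex.I * t * ((τ / ℏ - (n : ℝ) : ℝ) : ℂ)) * a t) / s := by
    intro t
    rw [rhoN]
    have hconj : (starRingEnd ℂ) (Complex.exp (Complex.I * t) * z)
        = Complex.exp (-(Complex.I * t)) * (starRingEnd ℂ) z := by
      rw [map_mul, ← Complex.exp_conj]
      simp
    rw [hconj]
    have hpow : (1 + Complex.exp (-(Complex.I * t)) * (starRingEnd ℂ) z * w) ^ (N - 1)
        = ∑ n ∈ Finset.range N,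
          Complex.exp (-(Complex.I * t)) ^ n * ((starRingEnd ℂ) z * w) ^ n * ((N-1).choose n : ℂ) := by
      rw [add_comm, add_pow]
      have : N - 1 + 1 = N := Nat.succ_pred_eq_of_pos hN
      rw [this]
      congr 1
      ext n
      rw [mul_pow, mul_assoc]
      ring
    rw [hpow, Finset.mul_sum, Finset.mul_sum, Finset.sum_div]
    refine Finset.sum_congr rfl fun n _ => ?_
    have hexp : Complex.exp (Complex.I * τ * t / (ℏ : ℂ)) * Complex.exp (-(Complex.I * t)) ^ n
        = Complex.exp (Complex.I * t * ((τ / ℏ - (n : ℝ) : ℝ) : ℂ)) := by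
      rw [← Complex.exp_nat_mul, ← Complex.exp_add]
      congr 1
      push_cast
      field_simp
      ring
    simp only [hc]
    rw [← hexp]
    ring
  rw [psiA]
  rw [integral_congr_ae (Filter.Eventually.of_forall key)]
  rw [integral_finset_sum]
  · refine Finset.sum_congr rfl fun n hn => ?_
    rw [integral_div, integral_const_mul]
    have hn' : n ≤ N - 1 := Nat.le_pred_of_lt (Finset.mem_range.mp hn)
    have hfac : (c n : ℂ) = (starRingEnd ℂ) (phiN N n z) * phiN N n w := by
      rw [phiN, phiN, map_mul, map_pow]
      have hcr : ((Real.sqrt ((N.factorial : ℝ) / (n.factorial * (N - 1 - n).factorial)) : ℝ) : ℂ) =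
          (starRingEnd ℂ) ((Real.sqrt ((N.factorial : ℝ) / (n.factorial * (N - 1 - n).factorial)) : ℝ) : ℂ) := by
        simp
      rw [← hcr]
      have hre : ((N : ℝ) * ((N-1).choose n : ℝ)) =
          Real.sqrt ((N.factorial : ℝ) / (n.factorial * (N - 1 - n).factorial)) *
          Real.sqrt ((N.factorial : ℝ) / (n.factorial * (N - 1 - n).factorial)) := by
        rw [Real.mul_self_sqrt (by positivity)]
        have hch : ((N-1).choose n) * (n.factorial * (N - 1 - n).factorial) = (N-1).factorial := by
          rw [← mul_assoc]
          exact Nat.choose_mul_factorial_mul_factorial hn'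
        have hNf : N.factorial = N * (N-1).factorial := by
          cases N with
          | zero => omega
          | succ m => simp [Nat.factorial_succ]
        rw [eq_div_iff (by positivity)]
        rw [hNf]
        push_cast [← hch]
        ring
      have : ((N : ℂ) * ((N-1).choose n : ℂ)) = ((((N : ℝ) * ((N-1).choose n : ℝ)) : ℝ) : ℂ) := by
        push_cast; ring
      rw [hc]
      simp only [this, hre]
      push_cast
      ring
    rw [hfac, tildeF]
    simp only [s]
    rw [div_eq_mul_inv, mul_comm ((starRingEnd ℂ) (phiN N n z) * phiN N n w) _]
    push_cast
    ring
  · intro n _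
    apply Integrable.div_const
    exact (integ_aux a _).const_mul _
end
end

section
/- For every f ∈ H_N one has the resolution of the identity ∫_ℂ ⟨f, ψ^a_z⟩_a · ψ^a_z dμ_N(z) = f, where ⟨f, g⟩_a := Σ_{n=0}^{N−1} (C^N_n)^(−1)·⟨f, φ_n⟩·⟨φ_n, g⟩ is the renormalized inner product on H_N (for which the vectors ψ^N_n = √(C^N_n)·φ_n are orthonormal). -/
open MeasureTheory Complex Real

noncomputable section

/-- The measure `dμ_N(z) = (1/π)·(1+|z|²)^{-(N+1)} dA(z)` on `ℂ`. -/
def muN (N : ℕ) : Measure ℂ :=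
  volume.withDensity (fun z => ENNReal.ofReal (1 / (Real.pi * (1 + ‖z‖ ^ 2) ^ (N + 1))))

/-- The inner product `⟨P,Q⟩ = ∫ P(z) conj(Q(z)) dμ_N(z)`, linear in the first argument. -/
def hermN (N : ℕ) (P Q : ℂ → ℂ) : ℂ :=
  ∫ z, P z * (starRingEnd ℂ) (Q z) ∂(muN N)

/-- `C^N_n = N·binom(N−1,n)·∫₀¹ |ã((τ−nℏ)/ℏ)|²·(τ/(1−τ))ⁿ·(1−τ)^{N−1} dτ`. -/
def CNn (N : ℕ) (ℏ : ℝ) (a : ℝ → ℂ) (n : ℕ) : ℝ :=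
  N * ((N - 1).choose n) *
    ∫ τ in (0:ℝ)..1, ‖tildeF a ((τ - n * ℏ) / ℏ)‖ ^ 2 * (τ / (1 - τ)) ^ n * (1 - τ) ^ (N - 1)

/-- The renormalized inner product `⟨f,g⟩_a = Σ_n (C^N_n)⁻¹·⟨f,φ_n⟩·⟨φ_n,g⟩`. -/
def hermA (N : ℕ) (ℏ : ℝ) (a : ℝ → ℂ) (f g : ℂ → ℂ) : ℂ :=
  ∑ n ∈ Finset.range N,
    (((CNn N ℏ a n : ℝ) : ℂ))⁻¹ * hermN N f (phiN N n) * hermN N (phiN N n) g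

lemma fact_prod (n m : ℕ) : n.factorial * ∏ j ∈ Finset.range (m + 1), (n + 1 + j)
    = (n + m + 1).factorial := by
  induction m with
  | zero => simp [Nat.factorial_succ, Nat.mul_comm]
  | succ k ih =>
      rw [Finset.prod_range_succ, ← Nat.mul_assoc, ih]
      have h : (n + (k+1) + 1).factorial = (n+k+2) * (n+k+1).factorial := by
        rw [show n + (k+1) + 1 = (n+k+1)+1 from rfl, Nat.factorial_succ]
      rw [h]
      ring

lemma beta_nat (n m : ℕ) :
    ∫ τ in Set.Ioo (0:ℝ) 1, τ ^ n * (1 - τ) ^ m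
      = (n.factorial : ℝ) * m.factorial / (n + m + 1).factorial := by
  have h1 : ∫ τ in Set.Ioo (0:ℝ) 1, τ ^ n * (1 - τ) ^ m
      = ∫ τ in (0:ℝ)..1, τ ^ n * (1 - τ) ^ m := by
    rw [intervalIntegral.integral_of_le (by norm_num), integral_Ioc_eq_integral_Ioo]
  have h2 : Complex.betaIntegral (n + 1) (m + 1)
      = ((∫ τ in (0:ℝ)..1, τ ^ n * (1 - τ) ^ m : ℝ) : ℂ) := by
    rw [Complex.betaIntegral, ← intervalIntegral.integral_ofReal]
    apply intervalIntegral.integral_congr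
    intro x _
    have e1 : ((n:ℂ) + 1) - 1 = ((n : ℕ) : ℂ) := by ring
    have e2 : ((m:ℂ) + 1) - 1 = ((m : ℕ) : ℂ) := by ring
    simp only [e1, e2, Complex.cpow_natCast]
    push_cast
    ring
  have hnat := fact_prod n m
  have hne : ((n + m + 1).factorial : ℂ) ≠ 0 := by exact_mod_cast (n+m+1).factorial_ne_zero
  have hne' : (n.factorial : ℂ) ≠ 0 := by exact_mod_cast n.factorial_ne_zero
  have hprodC : ((n.factorial : ℂ)) * ∏ j ∈ Finset.range (m + 1), ((n:ℂ) + 1 + j)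
      = ((n + m + 1).factorial : ℂ) := by
    rw [← hnat]; push_cast; ring
  have h3 := Complex.betaIntegral_eval_nat_add_one_right
    (u := (n:ℂ) + 1) (by simp; positivity) m
  rw [h2] at h3
  have hprod_ne : (∏ j ∈ Finset.range (m + 1), ((n:ℂ) + 1 + j)) ≠ 0 := by
    intro h0
    rw [h0, mul_zero] at hprodC
    exact hne hprodC.symm
  have key : ((∫ τ in (0:ℝ)..1, τ ^ n * (1 - τ) ^ m : ℝ) : ℂ)
      = ((n.factorial : ℝ) * m.factorial / (n + m + 1).factorial : ℝ) := by
    rw [h3]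
    push_cast
    rw [div_eq_div_iff hprod_ne hne, ← hprodC]
    ring
  rw [h1]
  exact_mod_cast key

lemma angular_offdiag (n m : ℕ) (hnm : n ≠ m) :
    (∫ θ in Set.Ioo (-Real.pi) Real.pi,
      Complex.exp (((n:ℂ) - m) * (θ * Complex.I))) = 0 := by
  have hk : ((n:ℂ) - m) ≠ 0 := sub_ne_zero.2 (by exact_mod_cast hnm)
  have hc : ((n:ℂ) - m) * Complex.I ≠ 0 := mul_ne_zero hk Complex.I_ne_zero
  rw [← integral_Ioc_eq_integral_Ioo,
    ← intervalIntegral.integral_of_le (by linarith [Real.pi_pos] : -Real.pi ≤ Real.pi)]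
  have h : ∀ θ : ℝ, Complex.exp (((n:ℂ) - m) * (θ * Complex.I))
      = Complex.exp ((((n:ℂ) - m) * Complex.I) * θ) := by
    intro θ; ring_nf
  simp_rw [h]
  rw [integral_exp_mul_complex hc]
  obtain ⟨k, hkk⟩ : ∃ k : ℤ, ((n:ℂ) - m) = (k:ℂ) := ⟨(n:ℤ) - m, by push_cast; ring⟩
  have h2 : (((n:ℂ) - m) * Complex.I) * ((Real.pi : ℂ))
      = (((n:ℂ) - m) * Complex.I) * ((-Real.pi : ℝ) : ℂ) + k * (2 * Real.pi * Complex.I) := by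
    rw [hkk]; push_cast; ring
  rw [h2, Complex.exp_add, Complex.exp_int_mul_two_pi_mul_I, mul_one, sub_self, zero_div]

lemma angular_diag : (∫ _θ in Set.Ioo (-Real.pi) Real.pi, (1:ℂ)) = ((2*Real.pi : ℝ) : ℂ) := by
  rw [setIntegral_const, Measure.real_def, Real.volume_Ioo]
  rw [ENNReal.toReal_ofReal (by linarith [Real.pi_pos])]
  simp only [real_smul, mul_one]
  push_cast
  ring

lemma image_sq : (fun r : ℝ => r^2) '' Set.Ioi 0 = Set.Ioi 0 := by
  ext s
  constructor
  · rintro ⟨r, hr, rfl⟩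
    exact pow_pos (Set.mem_Ioi.1 hr) 2
  · intro hs
    exact ⟨Real.sqrt s, Real.sqrt_pos.2 hs, Real.sq_sqrt (le_of_lt hs)⟩

lemma subst_sq (G : ℝ → ℂ) :
    ∫ s in Set.Ioi (0:ℝ), G s = ∫ r in Set.Ioi (0:ℝ), (2*r) • G (r^2) := by
  conv_lhs => rw [← image_sq]
  rw [integral_image_eq_integral_abs_deriv_smul measurableSet_Ioi
    (fun x _ => by simpa using (hasDerivAt_pow 2 x).hasDerivWithinAt)
    (fun a ha b hb hab => by
      have h1 : (a - b) * (a + b) = 0 := by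
        have : a^2 = b^2 := hab
        nlinarith [this]
      rcases mul_eq_zero.1 h1 with h | h
      · linarith
      · simp only [Set.mem_Ioi] at ha hb; linarith)]
  apply setIntegral_congr_fun measurableSet_Ioi
  intro r hr
  simp only [Set.mem_Ioi] at hr
  show |2 * r| • G (r^2) = (2*r) • G (r^2)
  rw [abs_of_pos (by linarith)]

lemma image_tau : (fun τ : ℝ => τ/(1-τ)) '' Set.Ioo 0 1 = Set.Ioi 0 := by
  ext s
  constructor
  · rintro ⟨τ, hτ, rfl⟩
    obtain ⟨h0, h1⟩ := hτ
    exact div_pos h0 (by linarith)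
  · intro hs
    have hs' : (0:ℝ) < s := hs
    refine ⟨s / (1 + s), ⟨div_pos hs' (by linarith), ?_⟩, ?_⟩
    · rw [div_lt_one (by linarith)]; linarith
    · show s / (1 + s) / (1 - s / (1 + s)) = s
      have h1 : 1 - s / (1 + s) = 1 / (1 + s) := by field_simp; ring
      rw [h1]
      have : (1:ℝ) + s ≠ 0 := by linarith
      field_simp

lemma subst_tau (G : ℝ → ℂ) :
    ∫ s in Set.Ioi (0:ℝ), G s
      = ∫ τ in Set.Ioo (0:ℝ) 1, ((1-τ)^2)⁻¹ • G (τ/(1-τ)) := by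
  conv_lhs => rw [← image_tau]
  rw [integral_image_eq_integral_abs_deriv_smul measurableSet_Ioo
    (fun τ hτ => by
      obtain ⟨h0, h1⟩ := hτ
      have hne : (1:ℝ) - τ ≠ 0 := (sub_pos.2 h1).ne'
      have hd : HasDerivAt (fun τ : ℝ => τ/(1-τ))
          ((1 * (1-τ) - τ * (-1)) / (1-τ)^2) τ :=
        (hasDerivAt_id τ).div ((hasDerivAt_id τ).const_sub 1) hne
      have : (1 * (1-τ) - τ * (-1)) / (1-τ)^2 = ((1-τ)^2)⁻¹ := by
        field_simp
        ring
      rw [this] at hd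
      exact hd.hasDerivWithinAt)
    (fun a ha b hb hab => by
      simp only [Set.mem_Ioo] at ha hb
      have hna : (1:ℝ) - a ≠ 0 := by intro h; linarith [ha.2]
      have hnb : (1:ℝ) - b ≠ 0 := by intro h; linarith [hb.2]
      field_simp at hab
      linarith)]
  apply setIntegral_congr_fun measurableSet_Ioo
  intro τ hτ
  simp only [Set.mem_Ioo] at hτ
  show |((1 - τ)^2)⁻¹| • G (τ/(1-τ)) = ((1-τ)^2)⁻¹ • G (τ/(1-τ))
  have h1 : (0:ℝ) < 1 - τ := by linarith [hτ.2]
  rw [abs_of_pos (by positivity)]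

lemma dens_nonneg (N : ℕ) (z : ℂ) : 0 ≤ 1 / (Real.pi * (1 + ‖z‖ ^ 2) ^ (N + 1)) := by
  have := Real.pi_pos
  positivity

lemma integral_muN (N : ℕ) (F : ℂ → ℂ) :
    ∫ z, F z ∂(muN N)
      = ∫ z, (1 / (Real.pi * (1 + ‖z‖ ^ 2) ^ (N + 1))) • F z := by
  rw [muN]
  have hmeas : Measurable fun z : ℂ =>
      Real.toNNReal (1 / (Real.pi * (1 + ‖z‖ ^ 2) ^ (N + 1))) := by
    apply Measurable.real_toNNReal
    apply Measurable.const_div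
    exact ((continuous_const.add ((continuous_norm).pow 2)).pow (N+1)).measurable.const_mul _
  rw [show (fun z : ℂ => ENNReal.ofReal (1 / (Real.pi * (1 + ‖z‖ ^ 2) ^ (N + 1))))
      = (fun z : ℂ => ((Real.toNNReal (1 / (Real.pi * (1 + ‖z‖ ^ 2) ^ (N + 1))) : NNReal)
          : ENNReal)) from rfl]
  rw [integral_withDensity_eq_integral_smul hmeas]
  congr 1
  ext z
  rw [NNReal.smul_def, Real.coe_toNNReal _ (dens_nonneg N z)]

lemma master (N : ℕ) (hN : 1 ≤ N) (n m : ℕ) (hn : n < N) (hm : m < N) (g : ℝ → ℂ) :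
    ∫ z, z ^ n * ((starRingEnd ℂ) z) ^ m * g (tauS z) ∂(muN N)
      = if n = m then
          ∫ τ in Set.Ioo (0:ℝ) 1, (τ ^ n * (1 - τ) ^ (N - 1 - n) : ℝ) • g τ
        else 0 := by
  have hπ := Real.pi_pos
  rw [integral_muN]
  rw [← Complex.integral_comp_polarCoord_symm]
  rw [polarCoord_target]
  -- rewrite the integrand as a product of a radial and an angular part
  set R : ℝ → ℂ := fun r =>
    ((r ^ (n + m + 1) * (1 / (Real.pi * (1 + r ^ 2) ^ (N + 1)))) : ℝ) •
      g (r ^ 2 / (1 + r ^ 2)) with hR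
  set A : ℝ → ℂ := fun θ => Complex.exp (((n:ℂ) - m) * (θ * Complex.I)) with hA
  have hsplit : ∫ p in Set.Ioi (0:ℝ) ×ˢ Set.Ioo (-Real.pi) Real.pi,
        p.1 • ((1 / (Real.pi * (1 + ‖Complex.polarCoord.symm p‖ ^ 2) ^ (N + 1))) •
          ((Complex.polarCoord.symm p) ^ n *
            ((starRingEnd ℂ) (Complex.polarCoord.symm p)) ^ m *
            g (tauS (Complex.polarCoord.symm p))))
      = ∫ p in Set.Ioi (0:ℝ) ×ˢ Set.Ioo (-Real.pi) Real.pi, R p.1 * A p.2 := by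
    apply setIntegral_congr_fun (measurableSet_Ioi.prod measurableSet_Ioo)
    rintro ⟨r, θ⟩ ⟨hr, hθ⟩
    simp only [Set.mem_Ioi] at hr
    have hz : Complex.polarCoord.symm (r, θ) = (r : ℂ) * Complex.exp (θ * Complex.I) := by
      rw [Complex.polarCoord_symm_apply, Complex.exp_mul_I]
      push_cast
      ring
    have hnorm : ‖Complex.polarCoord.symm (r, θ)‖ = r := by
      rw [Complex.norm_polarCoord_symm, abs_of_pos hr]
    have hconj : (starRingEnd ℂ) (Complex.polarCoord.symm (r, θ))
        = (r : ℂ) * Complex.exp (-(θ * Complex.I)) := by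
      rw [hz, map_mul, Complex.conj_ofReal, ← Complex.exp_conj, map_mul,
        Complex.conj_ofReal, Complex.conj_I]
      ring_nf
    have htau : tauS (Complex.polarCoord.symm (r, θ)) = r ^ 2 / (1 + r ^ 2) := by
      rw [tauS, hnorm]
    have hE : Complex.exp ((θ:ℂ) * Complex.I) ^ n *
          Complex.exp (-((θ:ℂ) * Complex.I)) ^ m
        = Complex.exp (((n:ℂ) - m) * (θ * Complex.I)) := by
      rw [← Complex.exp_nat_mul, ← Complex.exp_nat_mul, ← Complex.exp_add]
      congr 1
      ring
    have hnorm' : ‖(r:ℂ) * Complex.exp ((θ:ℂ) * Complex.I)‖ = r := by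
      rw [← hz]; exact hnorm
    show (r : ℝ) • _ = R r * A θ
    rw [htau, hconj, hz, hR, hA]
    rw [hnorm']
    simp only [real_smul, Complex.ofReal_mul, mul_pow]
    rw [← hE]
    push_cast
    ring
  rw [hsplit, Measure.volume_eq_prod, setIntegral_prod_mul]
  by_cases hnm : n = m
  · subst hnm
    rw [if_pos rfl]
    have hA2 : ∀ θ : ℝ, A θ = 1 := by
      intro θ
      rw [hA]
      simp
    simp_rw [hA2]
    rw [angular_diag]
    -- radial part
    set G : ℝ → ℂ := fun s =>
      (((1/2) * s ^ n * (1 / (Real.pi * (1 + s) ^ (N + 1)))) : ℝ) • g (s / (1 + s)) with hG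
    have hrad : ∫ r in Set.Ioi (0:ℝ), R r = ∫ s in Set.Ioi (0:ℝ), G s := by
      rw [subst_sq G]
      apply setIntegral_congr_fun measurableSet_Ioi
      intro r _
      show R r = (2*r) • G (r^2)
      rw [hR, hG]
      simp only [smul_smul]
      congr 1
      ring
    rw [hrad, subst_tau G]
    have hsub : ∀ τ ∈ Set.Ioo (0:ℝ) 1,
        ((1-τ)^2)⁻¹ • G (τ/(1-τ))
          = ((1 / (2*Real.pi)) : ℝ) • (((τ ^ n * (1 - τ) ^ (N - 1 - n)) : ℝ) • g τ) := by
      intro τ hτ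
      obtain ⟨h0, h1⟩ := hτ
      have h1τ : (0:ℝ) < 1 - τ := by linarith
      have hne : (1:ℝ) - τ ≠ 0 := h1τ.ne'
      have hs1 : (1:ℝ) + τ/(1-τ) = 1/(1-τ) := by field_simp; ring
      have hs2 : τ/(1-τ) / ((1:ℝ)/(1-τ)) = τ := by
        field_simp
      rw [hG]
      simp only [hs1, hs2, smul_smul]
      congr 1
      have hpow : ((1:ℝ)/(1-τ)) ^ (N+1) = ((1-τ) ^ (N+1))⁻¹ := by
        rw [one_div, inv_pow]
      rw [hpow]
      have hsplitpow : ((1:ℝ)-τ) ^ (N+1) = (1-τ) ^ (N-1-n) * (1-τ) ^ n * (1-τ)^2 := by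
        rw [← pow_add, ← pow_add]
        congr 1
        omega
      rw [hsplitpow]
      have hτn : (τ/(1-τ))^n = τ^n / (1-τ)^n := div_pow τ _ n
      rw [hτn]
      field_simp
    rw [setIntegral_congr_fun measurableSet_Ioo hsub, integral_smul]
    rw [real_smul]
    have : ((2*Real.pi : ℝ) : ℂ) ≠ 0 := by
      simp only [ne_eq, Complex.ofReal_eq_zero]
      positivity
    rw [show ((1 / (2*Real.pi) : ℝ) : ℂ) = (((2*Real.pi : ℝ)) : ℂ)⁻¹ by push_cast; simp]
    rw [inv_mul_eq_div, div_mul_eq_mul_div, mul_div_assoc, div_self this, mul_one]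
  · rw [if_neg hnm, angular_offdiag n m hnm, mul_zero]

lemma norm_exp_I_mul (x y : ℝ) : ‖Complex.exp (Complex.I * x * y)‖ = 1 := by
  rw [show Complex.I * x * y = ((x * y : ℝ) : ℂ) * Complex.I by push_cast; ring]
  rw [Complex.norm_exp_ofReal_mul_I]

lemma tildeF_continuous (a : SchwartzMap ℝ ℂ) : Continuous (tildeF ⇑a) := by
  apply Continuous.mul continuous_const
  apply continuous_of_dominated (bound := fun x => ‖(⇑a) x‖)
  · intro y
    exact ((Complex.continuous_exp.comp (by continuity)).mul a.continuous).aestronglyMeasurable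
  · intro y
    filter_upwards with x
    rw [norm_mul, norm_exp_I_mul, one_mul]
  · exact a.integrable.norm
  · filter_upwards with x
    exact (Complex.continuous_exp.comp (by continuity)).mul continuous_const

lemma tildeF_bound (a : SchwartzMap ℝ ℂ) (y : ℝ) :
    ‖tildeF (⇑a) y‖ ≤ (Real.sqrt (2 * Real.pi))⁻¹ * ∫ x : ℝ, ‖(⇑a) x‖ := by
  rw [tildeF, norm_mul, Complex.norm_real, Real.norm_eq_abs,
    _root_.abs_of_nonneg (by positivity : (0:ℝ) ≤ (Real.sqrt (2*Real.pi))⁻¹)]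
  apply mul_le_mul_of_nonneg_left _ (by positivity)
  calc ‖∫ x : ℝ, Complex.exp (Complex.I * x * y) * (⇑a) x‖
      ≤ ∫ x : ℝ, ‖Complex.exp (Complex.I * x * y) * (⇑a) x‖ :=
        norm_integral_le_integral_norm _
    _ = ∫ x : ℝ, ‖(⇑a) x‖ := by
        congr 1
        ext x
        rw [norm_mul, norm_exp_I_mul, one_mul]

lemma integrable_muN (N : ℕ) (hN : 1 ≤ N) {F : ℂ → ℂ} (hF : AEStronglyMeasurable F volume)
    {C : ℝ} (hbd : ∀ z, ‖F z‖ ≤ C * (1 + ‖z‖ ^ 2) ^ (N - 1)) :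
    Integrable F (muN N) := by
  have hπ := Real.pi_pos
  have hC0 : 0 ≤ C := by
    have h0 := hbd 0
    rw [norm_zero] at h0
    norm_num at h0
    exact le_trans (norm_nonneg (F 0)) (by exact h0)
  rw [muN]
  have hmeas : Measurable fun z : ℂ =>
      Real.toNNReal (1 / (Real.pi * (1 + ‖z‖ ^ 2) ^ (N + 1))) := by
    apply Measurable.real_toNNReal
    apply Measurable.const_div
    exact ((continuous_const.add ((continuous_norm).pow 2)).pow (N+1)).measurable.const_mul _
  rw [show (fun z : ℂ => ENNReal.ofReal (1 / (Real.pi * (1 + ‖z‖ ^ 2) ^ (N + 1))))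
      = (fun z : ℂ => ((Real.toNNReal (1 / (Real.pi * (1 + ‖z‖ ^ 2) ^ (N + 1))) : NNReal)
          : ENNReal)) from rfl]
  refine (integrable_withDensity_iff_integrable_smul hmeas).2 ?_
  have heq : (fun z : ℂ => (Real.toNNReal (1 / (Real.pi * (1 + ‖z‖ ^ 2) ^ (N + 1)))) • F z)
      = fun z : ℂ => (1 / (Real.pi * (1 + ‖z‖ ^ 2) ^ (N + 1))) • F z := by
    ext z
    rw [NNReal.smul_def, Real.coe_toNNReal _ (dens_nonneg N z)]
  rw [heq]
  have hdens_cont : Continuous fun z : ℂ => 1 / (Real.pi * (1 + ‖z‖ ^ 2) ^ (N + 1)) := by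
    apply Continuous.div continuous_const
      (continuous_const.mul ((continuous_const.add ((continuous_norm).pow 2)).pow (N+1)))
    intro z
    simp only [Pi.add_apply, Pi.mul_apply, Pi.pow_apply]
    positivity
  apply Integrable.mono'
    (g := fun z : ℂ => (4 * C / Real.pi) * (1 + ‖z‖) ^ (-(4:ℝ)))
  · apply Integrable.const_mul
    apply integrable_one_add_norm (E := ℂ)
    rw [Complex.finrank_real_complex]
    norm_num
  · exact hdens_cont.aestronglyMeasurable.smul hF
  · filter_upwards with z
    set t := ‖z‖ with ht
    have ht0 : 0 ≤ t := norm_nonneg z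
    have hpos2 : (0:ℝ) < 1 + t^2 := by positivity
    have hrpow : (1 + t) ^ (-(4:ℝ)) = ((1+t)^(4:ℕ))⁻¹ := by
      rw [Real.rpow_neg (by linarith), show ((4:ℝ)) = ((4:ℕ):ℝ) by norm_num,
        Real.rpow_natCast]
    rw [norm_smul, hrpow]
    have h1 : ‖(1 / (Real.pi * (1 + t ^ 2) ^ (N + 1)) : ℝ)‖
        = 1 / (Real.pi * (1 + t ^ 2) ^ (N + 1)) := abs_of_nonneg (dens_nonneg N z)
    rw [h1]
    have hb := hbd z
    rw [← ht] at hb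
    calc 1 / (Real.pi * (1 + t ^ 2) ^ (N + 1)) * ‖F z‖
        ≤ 1 / (Real.pi * (1 + t ^ 2) ^ (N + 1)) * (C * (1 + t ^ 2) ^ (N - 1)) := by
          apply mul_le_mul_of_nonneg_left hb (by positivity)
      _ = C / Real.pi * (1 / (1 + t^2)^2) := by
          rw [show N + 1 = (N - 1) + 2 by omega, pow_add]
          field_simp
      _ ≤ C / Real.pi * (4 / ((1+t)^(4:ℕ))) := by
          apply mul_le_mul_of_nonneg_left _ (by positivity)
          rw [div_le_div_iff₀ (by positivity) (by positivity)]
          nlinarith [sq_nonneg (1 - t), sq_nonneg ((1+t)^2 - 2*(1+t^2)), sq_nonneg t]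
      _ = 4 * C / Real.pi * ((1+t)^(4:ℕ))⁻¹ := by
          field_simp

lemma tauS_continuous : Continuous tauS := by
  apply Continuous.div ((continuous_norm).pow 2)
    (continuous_const.add ((continuous_norm).pow 2))
  intro z
  simp only [Pi.add_apply, Pi.mul_apply, Pi.pow_apply]
  positivity

lemma pow_norm_le (t : ℝ) (ht : 0 ≤ t) (k N : ℕ) (hk : k ≤ 2*(N-1)) :
    t ^ k ≤ (1 + t^2) ^ (N-1) := by
  rcases le_total t 1 with h | h
  · calc t ^ k ≤ 1 := pow_le_one₀ ht h
      _ ≤ (1 + t^2) ^ (N-1) := one_le_pow₀ (by nlinarith)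
  · calc t ^ k ≤ t ^ (2*(N-1)) := pow_le_pow_right₀ h hk
      _ = (t^2) ^ (N-1) := by rw [pow_mul]
      _ ≤ (1 + t^2) ^ (N-1) := pow_le_pow_left₀ (by positivity) (by linarith) _

lemma integrable_pows (N : ℕ) (hN : 1 ≤ N) (n m : ℕ) (hn : n < N) (hm : m < N)
    (g : ℝ → ℂ) (hg : Continuous g) (Cg : ℝ) (hCg : ∀ τ, ‖g τ‖ ≤ Cg) :
    Integrable (fun z : ℂ => z ^ n * ((starRingEnd ℂ) z) ^ m * g (tauS z)) (muN N) := by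
  apply integrable_muN N hN (C := Cg)
  · exact (((continuous_pow n).mul ((Complex.continuous_conj).pow m)).mul
      (hg.comp tauS_continuous)).aestronglyMeasurable
  · intro z
    rw [norm_mul, norm_mul, norm_pow, norm_pow, RCLike.norm_conj]
    have hCg0 : 0 ≤ Cg := le_trans (norm_nonneg _) (hCg 0)
    have h1 : ‖z‖ ^ n * ‖z‖ ^ m = ‖z‖ ^ (n + m) := by rw [pow_add]
    rw [h1]
    calc ‖z‖ ^ (n + m) * ‖g (tauS z)‖
        ≤ (1 + ‖z‖^2) ^ (N-1) * Cg := by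
          apply mul_le_mul (pow_norm_le _ (norm_nonneg z) _ _ (by omega)) (hCg _)
            (norm_nonneg _) (by positivity)
      _ = Cg * (1 + ‖z‖^2) ^ (N-1) := by ring

lemma sqrt2pi_pos : (0:ℝ) < Real.sqrt (2 * Real.pi) :=
  Real.sqrt_pos.2 (by positivity)

lemma sqrt2pi_ne : ((Real.sqrt (2 * Real.pi) : ℝ) : ℂ) ≠ 0 := by
  exact_mod_cast sqrt2pi_pos.ne'

lemma integral_exp_mul_a (a : SchwartzMap ℝ ℂ) (y : ℝ) :
    ∫ x : ℝ, Complex.exp (Complex.I * x * y) * (⇑a) x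
      = ((Real.sqrt (2 * Real.pi) : ℝ) : ℂ) * tildeF (⇑a) y := by
  rw [tildeF, ← mul_assoc, Complex.ofReal_inv, mul_inv_cancel₀ sqrt2pi_ne, one_mul]

lemma integrable_exp_mul_a (a : SchwartzMap ℝ ℂ) (y : ℝ) :
    Integrable (fun t : ℝ => Complex.exp (Complex.I * t * y) * (⇑a) t) := by
  apply a.integrable.bdd_mul (c := 1)
    ((Complex.continuous_exp.comp (by continuity)).aestronglyMeasurable)
  exact Filter.Eventually.of_forall (fun x => le_of_eq (norm_exp_I_mul x y))

lemma psiA_eq (N : ℕ) (hN : 1 ≤ N) (ℏ : ℝ) (hℏ : 0 < ℏ) (a : SchwartzMap ℝ ℂ) (z w : ℂ) :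
    psiA N ℏ (⇑a) z w = ∑ n ∈ Finset.range N,
      ((N:ℂ) * ((N-1).choose n) * tildeF (⇑a) ((tauS z - n * ℏ) / ℏ))
        * ((starRingEnd ℂ) z) ^ n * w ^ n := by
  have hℏ0 : (ℏ:ℂ) ≠ 0 := by exact_mod_cast hℏ.ne'
  rw [psiA]
  have key : ∀ t : ℝ,
      (⇑a) t * Complex.exp (Complex.I * (tauS z) * t / (ℏ:ℂ)) *
        rhoN N (Complex.exp (Complex.I * t) * z) w / ((Real.sqrt (2*Real.pi) : ℝ) : ℂ)
      = ∑ n ∈ Finset.range N,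
          ((N:ℂ) * ((N-1).choose n) * ((starRingEnd ℂ) z)^n * w^n
              / ((Real.sqrt (2*Real.pi) : ℝ) : ℂ))
            * (Complex.exp (Complex.I * t * (((tauS z - n*ℏ)/ℏ : ℝ) : ℂ)) * (⇑a) t) := by
    intro t
    rw [rhoN]
    have hconj : (starRingEnd ℂ) (Complex.exp (Complex.I * t) * z)
        = Complex.exp (-(Complex.I * t)) * (starRingEnd ℂ) z := by
      rw [map_mul]
      congr 1
      rw [← Complex.exp_conj]
      congr 1
      simp [Complex.conj_ofReal]
    have hbin : (1 + Complex.exp (-(Complex.I * t)) * (starRingEnd ℂ) z * w) ^ (N - 1)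
        = ∑ k ∈ Finset.range N,
            Complex.exp (-(Complex.I * t)) ^ k *
              (((starRingEnd ℂ) z) ^ k * w ^ k * ((N-1).choose k : ℂ)) := by
      rw [add_comm (1:ℂ), add_pow, Nat.sub_add_cancel hN]
      refine Finset.sum_congr rfl fun k _ => ?_
      rw [one_pow, mul_one, mul_pow, mul_pow]
      ring
    have hexp : ∀ k : ℕ,
        Complex.exp (Complex.I * (tauS z) * t / (ℏ:ℂ)) *
            Complex.exp (-(Complex.I * t)) ^ k
          = Complex.exp (Complex.I * t * (((tauS z - k*ℏ)/ℏ : ℝ) : ℂ)) := by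
      intro k
      rw [← Complex.exp_nat_mul, ← Complex.exp_add]
      congr 1
      push_cast
      field_simp
      ring
    rw [hconj, hbin, Finset.mul_sum, Finset.mul_sum, Finset.sum_div]
    refine Finset.sum_congr rfl fun k _ => ?_
    rw [← hexp k]
    ring
  rw [show (fun t : ℝ => (⇑a) t * Complex.exp (Complex.I * (tauS z) * t / (ℏ:ℂ)) *
        rhoN N (Complex.exp (Complex.I * t) * z) w / ((Real.sqrt (2*Real.pi) : ℝ) : ℂ))
      = fun t : ℝ => ∑ n ∈ Finset.range N,
          ((N:ℂ) * ((N-1).choose n) * ((starRingEnd ℂ) z)^n * w^n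
              / ((Real.sqrt (2*Real.pi) : ℝ) : ℂ))
            * (Complex.exp (Complex.I * t * (((tauS z - n*ℏ)/ℏ : ℝ) : ℂ)) * (⇑a) t)
    from funext key]
  rw [integral_finset_sum _ (fun k _ => (integrable_exp_mul_a a _).const_mul _)]
  refine Finset.sum_congr rfl fun k _ => ?_
  rw [MeasureTheory.integral_const_mul, integral_exp_mul_a]
  have hs0 := sqrt2pi_ne
  set s : ℂ := ((Real.sqrt (2*Real.pi) : ℝ) : ℂ) with hs
  field_simp

lemma master_one (N : ℕ) (hN : 1 ≤ N) (n m : ℕ) (hn : n < N) (hm : m < N) :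
    ∫ z, z ^ n * ((starRingEnd ℂ) z) ^ m ∂(muN N)
      = if n = m then ((n.factorial * (N-1-n).factorial / N.factorial : ℝ) : ℂ) else 0 := by
  have hm2 := master N hN n m hn hm (fun _ => (1:ℂ))
  have h1 : (fun z : ℂ => z ^ n * ((starRingEnd ℂ) z) ^ m * (fun _ : ℝ => (1:ℂ)) (tauS z))
      = fun z : ℂ => z ^ n * ((starRingEnd ℂ) z) ^ m := by
    ext z; simp
  rw [h1] at hm2
  rw [hm2]
  by_cases h : n = m
  · subst h
    rw [if_pos rfl, if_pos rfl]
    have h2 : ∀ τ : ℝ, ((τ^n*(1-τ)^(N-1-n) : ℝ)) • (fun _ : ℝ => (1:ℂ)) τ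
        = (((τ^n*(1-τ)^(N-1-n) : ℝ)) : ℂ) := by
      intro τ; simp [real_smul]
    simp_rw [h2]
    rw [show ∫ τ in Set.Ioo (0:ℝ) 1, ((τ^n*(1-τ)^(N-1-n) : ℝ) : ℂ)
        = ((∫ τ in Set.Ioo (0:ℝ) 1, τ^n*(1-τ)^(N-1-n) : ℝ) : ℂ) from integral_ofReal,
      beta_nat]
    norm_cast
    rw [show n + (N - 1 - n) + 1 = N by omega]
  · rw [if_neg h, if_neg h]

lemma integrable_pows' (N : ℕ) (hN : 1 ≤ N) (n m : ℕ) (hn : n < N) (hm : m < N) :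
    Integrable (fun z : ℂ => z ^ n * ((starRingEnd ℂ) z) ^ m) (muN N) := by
  have := integrable_pows N hN n m hn hm (fun _ => (1:ℂ)) continuous_const 1 (by simp)
  simpa using this

lemma Ncβ (N : ℕ) (hN : 1 ≤ N) (n : ℕ) (hn : n < N) :
    (N : ℝ) * ((N-1).choose n) * (n.factorial * (N-1-n).factorial / N.factorial) = 1 := by
  have h1 : (N-1).choose n * n.factorial * (N-1-n).factorial = (N-1).factorial :=
    Nat.choose_mul_factorial_mul_factorial (by omega)
  have h2 : N * (N-1).factorial = N.factorial := by
    cases N with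
    | zero => omega
    | succ M => simp [Nat.factorial_succ]
  have hf : (N.factorial : ℝ) ≠ 0 := by exact_mod_cast N.factorial_ne_zero
  have key_nat : N * ((N-1).choose n * (n.factorial * (N-1-n).factorial)) = N.factorial := by
    calc N * ((N-1).choose n * (n.factorial * (N-1-n).factorial))
        = N * ((N-1).choose n * n.factorial * (N-1-n).factorial) := by ring
      _ = N * (N-1).factorial := by rw [h1]
      _ = N.factorial := h2
  have keyR : (N : ℝ) * ((N-1).choose n) * (n.factorial * (N-1-n).factorial)
      = N.factorial := by
    exact_mod_cast congrArg (fun x : ℕ => (x : ℝ)) (by rw [← key_nat]; ring)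
  rw [mul_div_assoc', keyR, div_self hf]

def cN (N n : ℕ) : ℝ := Real.sqrt ((N.factorial : ℝ) / (n.factorial * (N - 1 - n).factorial))

def βN (N n : ℕ) : ℝ := (n.factorial * (N-1-n).factorial / N.factorial : ℝ)

lemma cβ (N n : ℕ) : ((cN N n)^2 * βN N n : ℝ) = 1 := by
  have h1 : (0:ℝ) < (n.factorial * (N - 1 - n).factorial : ℝ) := by
    have := n.factorial_pos
    have := (N-1-n).factorial_pos
    positivity
  have h2 : (0:ℝ) < (N.factorial : ℝ) := by exact_mod_cast N.factorial_pos
  rw [cN, βN, Real.sq_sqrt (by positivity)]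
  field_simp

lemma NcβC (N : ℕ) (hN : 1 ≤ N) (n : ℕ) (hn : n < N) :
    ((N:ℂ)) * (((N-1).choose n : ℕ) : ℂ) * ((βN N n : ℝ) : ℂ) = 1 := by
  have := Ncβ N hN n hn
  rw [βN]
  exact_mod_cast this

lemma hermN_f_phi (N : ℕ) (hN : 1 ≤ N) (f : Polynomial ℂ) (hdeg : f.natDegree < N)
    (n : ℕ) (hn : n < N) :
    hermN N (fun u => f.eval u) (phiN N n)
      = f.coeff n * ((cN N n : ℝ) : ℂ) * ((βN N n : ℝ) : ℂ) := by
  rw [hermN]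
  have hpt : ∀ u : ℂ, f.eval u * (starRingEnd ℂ) (phiN N n u)
      = ∑ k ∈ Finset.range N, (f.coeff k * ((cN N n : ℝ):ℂ))
          * (u ^ k * ((starRingEnd ℂ) u) ^ n) := by
    intro u
    rw [phiN, Polynomial.eval_eq_sum_range' hdeg, map_mul, map_pow,
      Complex.conj_ofReal, Finset.sum_mul]
    refine Finset.sum_congr rfl fun k _ => ?_
    rw [cN]
    ring
  rw [show (fun u : ℂ => f.eval u * (starRingEnd ℂ) (phiN N n u))
      = fun u : ℂ => ∑ k ∈ Finset.range N, (f.coeff k * ((cN N n : ℝ):ℂ))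
          * (u ^ k * ((starRingEnd ℂ) u) ^ n) from funext hpt]
  rw [integral_finset_sum _
    (fun k hk => (integrable_pows' N hN k n (Finset.mem_range.1 hk) hn).const_mul _)]
  rw [Finset.sum_eq_single n]
  · rw [MeasureTheory.integral_const_mul, master_one N hN n n hn hn, if_pos rfl, βN]
  · intro k _ hk
    rw [MeasureTheory.integral_const_mul, master_one N hN k n (by
      
      exact Finset.mem_range.1 ‹k ∈ Finset.range N›) hn, if_neg hk, mul_zero]
  · intro h
    exact absurd (Finset.mem_range.2 hn) h

lemma hermN_phi_psi (N : ℕ) (hN : 1 ≤ N) (ℏ : ℝ) (hℏ : 0 < ℏ) (a : SchwartzMap ℝ ℂ)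
    (n : ℕ) (hn : n < N) (z : ℂ) :
    hermN N (phiN N n) (psiA N ℏ (⇑a) z)
      = ((cN N n : ℝ) : ℂ) * z ^ n
          * (starRingEnd ℂ) (tildeF (⇑a) ((tauS z - n*ℏ)/ℏ)) := by
  rw [hermN]
  have hpt : ∀ u : ℂ, phiN N n u * (starRingEnd ℂ) (psiA N ℏ (⇑a) z u)
      = ∑ m ∈ Finset.range N,
          (((cN N n : ℝ):ℂ) * ((N:ℂ) * (((N-1).choose m : ℕ):ℂ))
              * (starRingEnd ℂ) (tildeF (⇑a) ((tauS z - m*ℏ)/ℏ)) * z ^ m)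
            * (u ^ n * ((starRingEnd ℂ) u) ^ m) := by
    intro u
    rw [psiA_eq N hN ℏ hℏ a z u, map_sum, phiN, Finset.mul_sum]
    refine Finset.sum_congr rfl fun m _ => ?_
    simp only [map_mul, map_pow, map_natCast, Complex.conj_conj]
    rw [cN]
    ring
  rw [show (fun u : ℂ => phiN N n u * (starRingEnd ℂ) (psiA N ℏ (⇑a) z u))
      = _ from funext hpt]
  rw [integral_finset_sum _
    (fun m hm => (integrable_pows' N hN n m hn (Finset.mem_range.1 hm)).const_mul _)]
  rw [Finset.sum_eq_single n]
  · rw [MeasureTheory.integral_const_mul, master_one N hN n n hn hn, if_pos rfl]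
    have h1 := NcβC N hN n hn
    calc ((cN N n : ℝ):ℂ) * ((N:ℂ) * (((N-1).choose n : ℕ):ℂ))
          * (starRingEnd ℂ) (tildeF (⇑a) ((tauS z - n*ℏ)/ℏ)) * z ^ n * ((βN N n : ℝ) : ℂ)
        = (((cN N n : ℝ):ℂ) * z ^ n
            * (starRingEnd ℂ) (tildeF (⇑a) ((tauS z - n*ℏ)/ℏ)))
            * (((N:ℂ)) * (((N-1).choose n : ℕ) : ℂ) * ((βN N n : ℝ) : ℂ)) := by ring
      _ = _ := by rw [h1, mul_one]
  · intro m hm hmn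
    rw [MeasureTheory.integral_const_mul,
      master_one N hN n m hn (Finset.mem_range.1 hm), if_neg (fun h => hmn h.symm), mul_zero]
  · intro h
    exact absurd (Finset.mem_range.2 hn) h

lemma conj_mul_self (t : ℂ) : (starRingEnd ℂ) t * t = ((‖t‖^2 : ℝ) : ℂ) := by
  rw [mul_comm, Complex.mul_conj, Complex.normSq_eq_norm_sq]

set_option maxHeartbeats 2000000 in
/-- resolution of the identity
`∫_ℂ ⟨f, ψ^a_z⟩_a · ψ^a_z dμ_N(z) = f` for every `f ∈ H_N`. -/
theorem stmt6 (N : ℕ) (hN : 1 ≤ N) (ℏ : ℝ) (hℏ : 0 < ℏ) (a : SchwartzMap ℝ ℂ)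
    (hC : ∀ n : ℕ, n ≤ N - 1 → 0 < CNn N ℏ (⇑a) n)
    (f : Polynomial ℂ) (hf : f.degree < (N : ℕ)) (w : ℂ) :
    (∫ z, hermA N ℏ (⇑a) (fun u => f.eval u) (psiA N ℏ (⇑a) z) * psiA N ℏ (⇑a) z w
        ∂(muN N)) = f.eval w := by
  have hdeg : f.natDegree < N := by
    rcases eq_or_ne f 0 with hf0 | hf0
    · rw [hf0]
      simp; omega
    · exact (Polynomial.natDegree_lt_iff_degree_lt hf0).2 (by exact_mod_cast hf)
  set Ma : ℝ := (Real.sqrt (2 * Real.pi))⁻¹ * ∫ x : ℝ, ‖(⇑a) x‖ with hMa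
  have hpt : ∀ z : ℂ,
      hermA N ℏ (⇑a) (fun u => f.eval u) (psiA N ℏ (⇑a) z) * psiA N ℏ (⇑a) z w
      = ∑ n ∈ Finset.range N, ∑ m ∈ Finset.range N,
          ((((CNn N ℏ (⇑a) n : ℝ) : ℂ))⁻¹
              * (f.coeff n * ((cN N n : ℝ):ℂ) * ((βN N n : ℝ):ℂ)) * ((cN N n : ℝ):ℂ)
              * ((N:ℂ) * (((N-1).choose m : ℕ):ℂ) * w ^ m))
            * (z ^ n * ((starRingEnd ℂ) z) ^ m *
                ((starRingEnd ℂ) (tildeF (⇑a) ((tauS z - n*ℏ)/ℏ))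
                  * tildeF (⇑a) ((tauS z - m*ℏ)/ℏ))) := by
    intro z
    rw [hermA, psiA_eq N hN ℏ hℏ a z w, Finset.sum_mul_sum]
    refine Finset.sum_congr rfl fun n hn => Finset.sum_congr rfl fun m _ => ?_
    rw [hermN_f_phi N hN f hdeg n (Finset.mem_range.1 hn),
      hermN_phi_psi N hN ℏ hℏ a n (Finset.mem_range.1 hn) z]
    ring
  rw [show (fun z : ℂ =>
        hermA N ℏ (⇑a) (fun u => f.eval u) (psiA N ℏ (⇑a) z) * psiA N ℏ (⇑a) z w)
      = _ from funext hpt]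
  have hint : ∀ n m : ℕ, n < N → m < N → Integrable (fun z : ℂ =>
      z ^ n * ((starRingEnd ℂ) z) ^ m *
        ((starRingEnd ℂ) (tildeF (⇑a) ((tauS z - n*ℏ)/ℏ))
          * tildeF (⇑a) ((tauS z - m*ℏ)/ℏ))) (muN N) := by
    intro n m hn hm
    have hcont : Continuous (fun τ : ℝ =>
        (starRingEnd ℂ) (tildeF (⇑a) ((τ - n*ℏ)/ℏ)) * tildeF (⇑a) ((τ - m*ℏ)/ℏ)) := by
      apply Continuous.mul
      · exact Complex.continuous_conj.comp ((tildeF_continuous a).comp (by continuity))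
      · exact (tildeF_continuous a).comp (by continuity)
    have hbd : ∀ τ : ℝ, ‖(starRingEnd ℂ) (tildeF (⇑a) ((τ - n*ℏ)/ℏ))
        * tildeF (⇑a) ((τ - m*ℏ)/ℏ)‖ ≤ Ma * Ma := by
      intro τ
      rw [norm_mul, RCLike.norm_conj]
      exact mul_le_mul (tildeF_bound a _) (tildeF_bound a _) (norm_nonneg _)
        (le_trans (norm_nonneg _) (tildeF_bound a 0))
    exact integrable_pows N hN n m hn hm
      (fun τ => (starRingEnd ℂ) (tildeF (⇑a) ((τ - n*ℏ)/ℏ)) * tildeF (⇑a) ((τ - m*ℏ)/ℏ))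
      hcont (Ma * Ma) hbd
  rw [integral_finset_sum (Finset.range N)
    (f := fun n (z : ℂ) => ∑ m ∈ Finset.range N,
      ((((CNn N ℏ (⇑a) n : ℝ) : ℂ))⁻¹
          * (f.coeff n * ((cN N n : ℝ):ℂ) * ((βN N n : ℝ):ℂ)) * ((cN N n : ℝ):ℂ)
          * ((N:ℂ) * (((N-1).choose m : ℕ):ℂ) * w ^ m))
        * (z ^ n * ((starRingEnd ℂ) z) ^ m *
            ((starRingEnd ℂ) (tildeF (⇑a) ((tauS z - n*ℏ)/ℏ))
              * tildeF (⇑a) ((tauS z - m*ℏ)/ℏ))))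
    (fun n hn => integrable_finset_sum _
      (fun m hm => ((hint n m (Finset.mem_range.1 hn) (Finset.mem_range.1 hm)).const_mul _)))]
  refine Eq.trans (Finset.sum_congr rfl fun n hn => ?_)
    (Polynomial.eval_eq_sum_range' hdeg w).symm
  have hnN : n < N := Finset.mem_range.1 hn
  rw [integral_finset_sum (Finset.range N)
    (f := fun m (z : ℂ) =>
      ((((CNn N ℏ (⇑a) n : ℝ) : ℂ))⁻¹
          * (f.coeff n * ((cN N n : ℝ):ℂ) * ((βN N n : ℝ):ℂ)) * ((cN N n : ℝ):ℂ)
          * ((N:ℂ) * (((N-1).choose m : ℕ):ℂ) * w ^ m))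
        * (z ^ n * ((starRingEnd ℂ) z) ^ m *
            ((starRingEnd ℂ) (tildeF (⇑a) ((tauS z - n*ℏ)/ℏ))
              * tildeF (⇑a) ((tauS z - m*ℏ)/ℏ))))
    (fun m hm => ((hint n m hnN (Finset.mem_range.1 hm)).const_mul _))]
  rw [Finset.sum_eq_single n]
  · -- diagonal term
    rw [MeasureTheory.integral_const_mul,
      master N hN n n hnN hnN
        (fun τ => (starRingEnd ℂ) (tildeF (⇑a) ((τ - n*ℏ)/ℏ))
          * tildeF (⇑a) ((τ - n*ℏ)/ℏ)),
      if_pos rfl]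
    have hsmul : ∀ τ : ℝ, ((τ^n*(1-τ)^(N-1-n) : ℝ)) •
        ((fun τ : ℝ => (starRingEnd ℂ) (tildeF (⇑a) ((τ - n*ℏ)/ℏ))
          * tildeF (⇑a) ((τ - n*ℏ)/ℏ)) τ)
        = ((τ^n*(1-τ)^(N-1-n) * ‖tildeF (⇑a) ((τ - n*ℏ)/ℏ)‖^2 : ℝ) : ℂ) := by
      intro τ
      rw [show ((fun τ : ℝ => (starRingEnd ℂ) (tildeF (⇑a) ((τ - n*ℏ)/ℏ))
          * tildeF (⇑a) ((τ - n*ℏ)/ℏ)) τ) = ((‖tildeF (⇑a) ((τ - n*ℏ)/ℏ)‖^2 : ℝ) : ℂ)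
          from conj_mul_self _]
      rw [real_smul, ← Complex.ofReal_mul]
    simp_rw [hsmul]
    rw [show ∫ τ in Set.Ioo (0:ℝ) 1,
          ((τ^n*(1-τ)^(N-1-n) * ‖tildeF (⇑a) ((τ - n*ℏ)/ℏ)‖^2 : ℝ) : ℂ)
        = ((∫ τ in Set.Ioo (0:ℝ) 1,
            τ^n*(1-τ)^(N-1-n) * ‖tildeF (⇑a) ((τ - n*ℏ)/ℏ)‖^2 : ℝ) : ℂ)
        from integral_ofReal]
    have hCN : CNn N ℏ (⇑a) n = ((N : ℝ) * ((N-1).choose n)) *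
        ∫ τ in Set.Ioo (0:ℝ) 1,
          τ^n*(1-τ)^(N-1-n) * ‖tildeF (⇑a) ((τ - n*ℏ)/ℏ)‖^2 := by
      rw [CNn, intervalIntegral.integral_of_le (by norm_num), integral_Ioc_eq_integral_Ioo]
      congr 1
      apply setIntegral_congr_fun measurableSet_Ioo
      intro τ hτ
      obtain ⟨h0, h1⟩ := hτ
      have hne : (1:ℝ) - τ ≠ 0 := by intro h; linarith
      show ‖tildeF (⇑a) ((τ - n*ℏ)/ℏ)‖^2 * (τ/(1-τ))^n * (1-τ)^(N-1)
        = τ^n*(1-τ)^(N-1-n) * ‖tildeF (⇑a) ((τ - n*ℏ)/ℏ)‖^2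
      rw [div_pow, show N-1 = n + (N-1-n) by omega, pow_add]
      field_simp
      ring
      rw [Nat.add_sub_cancel]
    have hCne : ((CNn N ℏ (⇑a) n : ℝ) : ℂ) ≠ 0 := by
      exact_mod_cast (hC n (by omega)).ne'
    have hc2 : ((cN N n : ℝ):ℂ) * ((βN N n : ℝ):ℂ) * ((cN N n : ℝ):ℂ) = 1 := by
      rw [← Complex.ofReal_mul, ← Complex.ofReal_mul, ← Complex.ofReal_one]
      congr 1
      have := cβ N n
      nlinarith [this]
    set r : ℝ := ∫ τ in Set.Ioo (0:ℝ) 1,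
      τ^n*(1-τ)^(N-1-n) * ‖tildeF (⇑a) ((τ - n*ℏ)/ℏ)‖^2 with hr
    have hfinal : (((CNn N ℏ (⇑a) n : ℝ) : ℂ))⁻¹
        * ((N:ℂ) * (((N-1).choose n : ℕ):ℂ) * ((r:ℝ):ℂ)) = 1 := by
      rw [show (N:ℂ) * (((N-1).choose n : ℕ):ℂ) * ((r:ℝ):ℂ)
          = ((CNn N ℏ (⇑a) n : ℝ) : ℂ) by rw [hCN]; push_cast; ring]
      exact inv_mul_cancel₀ hCne
    calc (((CNn N ℏ (⇑a) n : ℝ) : ℂ))⁻¹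
          * (f.coeff n * ((cN N n : ℝ):ℂ) * ((βN N n : ℝ):ℂ)) * ((cN N n : ℝ):ℂ)
          * ((N:ℂ) * (((N-1).choose n : ℕ):ℂ) * w ^ n) * ((r:ℝ):ℂ)
        = (f.coeff n * w ^ n)
            * (((cN N n : ℝ):ℂ) * ((βN N n : ℝ):ℂ) * ((cN N n : ℝ):ℂ))
            * ((((CNn N ℏ (⇑a) n : ℝ) : ℂ))⁻¹
              * ((N:ℂ) * (((N-1).choose n : ℕ):ℂ) * ((r:ℝ):ℂ))) := by ring
      _ = f.coeff n * w ^ n := by rw [hc2, hfinal, mul_one, mul_one]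
  · intro m hm hmn
    rw [MeasureTheory.integral_const_mul,
      master N hN n m hnN (Finset.mem_range.1 hm)
        (fun τ => (starRingEnd ℂ) (tildeF (⇑a) ((τ - n*ℏ)/ℏ))
          * tildeF (⇑a) ((τ - m*ℏ)/ℏ)),
      if_neg (fun h => hmn h.symm), mul_zero]
  · intro h
    exact absurd (Finset.mem_range.2 hnN) h
end
end

section
/- Fix an integer k with 1 ≤ k ≤ N−1 and a function γ : ℝ → ℂ, and let 𝓝_{k,γ} be the linear operator on H_N defined by 𝓝_{k,γ}ψ^N_n := γ(nℏ)·ψ^N_{n+k} for 0 ≤ n ≤ N−1−k and 𝓝_{k,γ}ψ^N_n := 0 for N−1−k < n ≤ N−1. Then for every z ∈ ℂ∖{0}: 𝓝_{k,γ}ψ^a_z = Σ_{n=k}^{N−1} conj(z)^(−k)·μ_k(n)·√(C^N_n/C^N_{n−k})·γ((n−k)ℏ)·ã(τ(z)/ℏ − (n−k))·conj(φ_n(z))·φ_n. (This expresses 𝓝_{k,γ}ψ^a_z = ψ^{Σ_{k,γ}(z)a}_z, the upper-diagonal case of Proposition 3.4.) -/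
open MeasureTheory Complex Real

noncomputable section

/-- The normalized vectors `ψ^N_n = √(C^N_n)·φ_n`. -/
def psiNn (N : ℕ) (ℏ : ℝ) (a : ℝ → ℂ) (n : ℕ) : ℂ → ℂ :=
  fun z => (Real.sqrt (CNn N ℏ a n) : ℂ) * phiN N n z

lemma integrable_exp_mul (a : SchwartzMap ℝ ℂ) (μ : ℝ) :
    Integrable (fun t : ℝ => Complex.exp (Complex.I * t * μ) * a t) := by
  apply a.integrable.bdd_mul (c := 1)
  · exact (Complex.continuous_exp.comp (by continuity)).aestronglyMeasurable
  · refine Filter.Eventually.of_forall fun t => le_of_eq ?_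
    rw [Complex.norm_exp]
    norm_num [Complex.mul_re, Complex.mul_im]

lemma fourier_int (a : SchwartzMap ℝ ℂ) (y : ℝ) :
    (∫ t : ℝ, Complex.exp (Complex.I * t * y) * a t)
      = (Real.sqrt (2 * Real.pi) : ℂ) * tildeF (⇑a) y := by
  have hs : (Real.sqrt (2 * Real.pi) : ℝ) ≠ 0 := by
    simp [Real.sqrt_ne_zero', Real.pi_pos]
  rw [tildeF, Complex.ofReal_inv, ← mul_assoc, mul_inv_cancel₀ (by exact_mod_cast hs), one_mul]

set_option maxHeartbeats 1000000 in
lemma psiA_expand (N : ℕ) (hN : 1 ≤ N) (ℏ : ℝ) (hℏ : ℏ ≠ 0) (a : SchwartzMap ℝ ℂ)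
    (z w : ℂ) :
    psiA N ℏ (⇑a) z w = ∑ n ∈ Finset.range N,
      (N : ℂ) * ((N - 1).choose n : ℂ) * tildeF (⇑a) (tauS z / ℏ - n)
        * ((starRingEnd ℂ) z) ^ n * w ^ n := by
  have hs : (Real.sqrt (2 * Real.pi) : ℂ) ≠ 0 := by
    simp [Complex.ofReal_ne_zero, Real.sqrt_ne_zero', Real.pi_pos]
  have key : ∀ t : ℝ,
      (a t * Complex.exp (Complex.I * (tauS z) * t / (ℏ : ℂ)) *
        rhoN N (Complex.exp (Complex.I * t) * z) w / (Real.sqrt (2 * Real.pi) : ℂ))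
      = ∑ n ∈ Finset.range N,
          (Complex.exp (Complex.I * t * ((tauS z / ℏ - n : ℝ) : ℂ)) * a t) •
            ((N : ℂ) * ((N - 1).choose n : ℂ) * ((starRingEnd ℂ) z) ^ n * w ^ n
              / (Real.sqrt (2 * Real.pi) : ℂ)) := by
    intro t
    have hconj : (starRingEnd ℂ) (Complex.exp (Complex.I * t) * z)
        = Complex.exp (-(Complex.I * t)) * (starRingEnd ℂ) z := by
      rw [map_mul, ← Complex.exp_conj]
      simp
    rw [rhoN, hconj]
    have hbin : (1 + Complex.exp (-(Complex.I * t)) * (starRingEnd ℂ) z * w) ^ (N - 1)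
        = ∑ n ∈ Finset.range N,
            (Complex.exp (-(Complex.I * t)) * (starRingEnd ℂ) z * w) ^ n
              * ((N - 1).choose n : ℂ) := by
      rw [show (1 + Complex.exp (-(Complex.I * t)) * (starRingEnd ℂ) z * w)
            = (Complex.exp (-(Complex.I * t)) * (starRingEnd ℂ) z * w) + 1 by ring,
        add_pow]
      rw [show N - 1 + 1 = N by omega]
      simp
    rw [hbin, Finset.mul_sum, Finset.mul_sum, Finset.sum_div]
    refine Finset.sum_congr rfl fun n hn => ?_
    rw [smul_eq_mul]
    have hexp : Complex.exp (Complex.I * (tauS z) * t / (ℏ : ℂ)) *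
        (Complex.exp (-(Complex.I * t))) ^ n
        = Complex.exp (Complex.I * t * ((tauS z / ℏ - n : ℝ) : ℂ)) := by
      rw [← Complex.exp_nat_mul, ← Complex.exp_add]
      congr 1
      push_cast
      field_simp
      ring
    rw [mul_pow, mul_pow, ← hexp]
    ring
  rw [psiA, MeasureTheory.integral_congr_ae (Filter.Eventually.of_forall key),
    MeasureTheory.integral_finset_sum]
  · refine Finset.sum_congr rfl fun n hn => ?_
    rw [integral_smul_const, fourier_int, smul_eq_mul]
    have cancel : ∀ (s F C : ℂ), s ≠ 0 → (s * F) * (C / s) = F * C := by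
      intro s F C hs0; field_simp
    rw [cancel _ _ _ hs]
    ring
  · intro n hn
    exact (integrable_exp_mul a _).smul_const _


lemma scalar_id (F G P B Sm Sj x v : ℂ) (j k : ℕ) (hx : x ≠ 0) (hSj : Sj ≠ 0) :
    F * (P * B * x ^ j) / Sj * G * (Sm * (B * v))
      = x ^ (-(k : ℤ)) * P * (Sm / Sj) * G * F * (B * x ^ (j + k)) * (B * v) := by
  rw [zpow_neg, zpow_natCast, pow_add]
  field_simp

set_option maxHeartbeats 1000000 in
/-- upper-diagonal case of Proposition 3.4: for
`𝓝_{k,γ}ψ^N_n = γ(nℏ)·ψ^N_{n+k}` (for `0 ≤ n ≤ N−1−k`, and `0` otherwise), one has, for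
`z ≠ 0`,
`𝓝_{k,γ}ψ^a_z = Σ_{n=k}^{N−1} conj(z)^{−k}·μ_k(n)·√(C^N_n/C^N_{n−k})·γ((n−k)ℏ)·
                 ã(τ(z)/ℏ−(n−k))·conj(φ_n(z))·φ_n`. -/
theorem stmt8 (N : ℕ) (hN : 1 ≤ N) (ℏ : ℝ) (hℏ : 0 < ℏ) (a : SchwartzMap ℝ ℂ)
    (hC : ∀ n : ℕ, n ≤ N - 1 → 0 < CNn N ℏ (⇑a) n)
    (k : ℕ) (hk1 : 1 ≤ k) (hk2 : k ≤ N - 1) (γ : ℝ → ℂ)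
    (T : (ℂ → ℂ) →ₗ[ℂ] (ℂ → ℂ))
    (hT : ∀ n : ℕ, n ≤ N - 1 →
      T (psiNn N ℏ (⇑a) n)
        = if n ≤ N - 1 - k then γ ((n : ℝ) * ℏ) • psiNn N ℏ (⇑a) (n + k) else 0)
    (z : ℂ) (hz : z ≠ 0) :
    T (psiA N ℏ (⇑a) z) = fun w => ∑ n ∈ Finset.Icc k (N - 1),
      ((starRingEnd ℂ) z) ^ (-(k : ℤ))
        * (Real.sqrt ((n.choose k : ℝ) / ((N - 1 - n + k).choose k : ℝ)) : ℂ)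
        * (Real.sqrt (CNn N ℏ (⇑a) n / CNn N ℏ (⇑a) (n - k)) : ℂ)
        * γ (((n : ℝ) - k) * ℏ)
        * tildeF (⇑a) (tauS z / ℏ - ((n : ℝ) - k))
        * (starRingEnd ℂ) (phiN N n z) * phiN N n w := by
  classical
  have hk2' : k ≤ N - 1 := hk2
  have hcz : (starRingEnd ℂ) z ≠ 0 := by simpa using hz
  -- coefficients
  set c : ℕ → ℂ := fun n => tildeF (⇑a) (tauS z / ℏ - n) * (starRingEnd ℂ) (phiN N n z)
      / (Real.sqrt (CNn N ℏ (⇑a) n) : ℂ) with hc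
  -- expansion of psiA in the psiNn basis
  have hsqrt_ne : ∀ n : ℕ, n ≤ N - 1 → (Real.sqrt (CNn N ℏ (⇑a) n) : ℂ) ≠ 0 := by
    intro n hn
    exact Complex.ofReal_ne_zero.mpr (Real.sqrt_ne_zero'.mpr (hC n hn))
  have hr : ∀ n : ℕ, n ≤ N - 1 →
      (Real.sqrt ((N.factorial : ℝ) / (n.factorial * (N - 1 - n).factorial)) : ℝ) *
        Real.sqrt ((N.factorial : ℝ) / (n.factorial * (N - 1 - n).factorial))
      = (N : ℝ) * ((N - 1).choose n : ℝ) := by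
    intro n hn
    rw [Real.mul_self_sqrt (by positivity)]
    have h1 : (N - 1).choose n * n.factorial * (N - 1 - n).factorial = (N - 1).factorial :=
      Nat.choose_mul_factorial_mul_factorial hn
    have h2 : N * (N - 1).factorial = N.factorial := Nat.mul_factorial_pred (by omega)
    rw [div_eq_iff (by positivity)]
    push_cast [← h2, ← h1]
    ring
  have hpsiA : psiA N ℏ (⇑a) z = ∑ n ∈ Finset.range N, c n • psiNn N ℏ (⇑a) n := by
    funext w
    rw [psiA_expand N hN ℏ (ne_of_gt hℏ) a z w]
    rw [Finset.sum_apply]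
    refine Finset.sum_congr rfl fun n hn => ?_
    have hn' : n ≤ N - 1 := by have := Finset.mem_range.mp hn; omega
    simp only [Pi.smul_apply, psiNn, smul_eq_mul, hc, phiN, map_mul, Complex.conj_ofReal,
      map_pow]
    rw [div_mul_eq_mul_div, eq_div_iff (hsqrt_ne n hn')]
    have hrC : ((N : ℂ) * (((N - 1).choose n : ℕ) : ℂ))
        = ((Real.sqrt ((N.factorial : ℝ) / (n.factorial * (N - 1 - n).factorial)) : ℂ) *
            (Real.sqrt ((N.factorial : ℝ) / (n.factorial * (N - 1 - n).factorial)) : ℂ)) := by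
      exact_mod_cast (hr n hn').symm
    rw [hrC]
    ring
  rw [hpsiA, map_sum]
  have hTn : ∀ n ∈ Finset.range N, T (c n • psiNn N ℏ (⇑a) n)
      = if n ≤ N - 1 - k then (c n * γ ((n : ℝ) * ℏ)) • psiNn N ℏ (⇑a) (n + k) else 0 := by
    intro n hn
    have hn' : n ≤ N - 1 := by have := Finset.mem_range.mp hn; omega
    rw [_root_.map_smul, hT n hn']
    split_ifs
    · rw [smul_smul]
    · rw [smul_zero]
  rw [Finset.sum_congr rfl hTn, Finset.sum_ite, Finset.sum_const_zero, add_zero]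
  have hfil : Finset.filter (fun n => n ≤ N - 1 - k) (Finset.range N)
      = Finset.range (N - k) := by
    ext n; simp only [Finset.mem_filter, Finset.mem_range]; omega
  rw [hfil]
  have hbij : ∑ n ∈ Finset.range (N - k),
        (c n * γ ((n : ℝ) * ℏ)) • psiNn N ℏ (⇑a) (n + k)
      = ∑ m ∈ Finset.Icc k (N - 1),
        (c (m - k) * γ (((m - k : ℕ) : ℝ) * ℏ)) • psiNn N ℏ (⇑a) m := by
    refine Finset.sum_nbij' (fun n => n + k) (fun m => m - k) ?_ ?_ ?_ ?_ ?_
    · intro n hn; simp only [Finset.mem_range] at hn; simp only [Finset.mem_Icc]; omega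
    · intro m hm; simp only [Finset.mem_Icc] at hm; simp only [Finset.mem_range]; omega
    · intro n _; show n + k - k = n; omega
    · intro m hm; simp only [Finset.mem_Icc] at hm; show m - k + k = m; omega
    · intro n _
      rw [Nat.add_sub_cancel]
  rw [hbij]
  funext w
  rw [Finset.sum_apply]
  refine Finset.sum_congr rfl fun m hm => ?_
  simp only [Finset.mem_Icc] at hm
  obtain ⟨hkm, hmN⟩ := hm
  obtain ⟨j, rfl⟩ : ∃ j, m = j + k := ⟨m - k, by omega⟩
  have hj' : j ≤ N - 1 := by omega
  have hm' : j + k ≤ N - 1 := hmN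
  have hb : N - 1 - j = (N - 1 - (j + k)) + k := by omega
  have hq0 : (0 : ℝ) ≤ ((j + k).choose k : ℝ) / ((N - 1 - (j + k) + k).choose k : ℝ) := by
    positivity
  have hrad : ((N.factorial : ℝ) / (j.factorial * (N - 1 - j).factorial))
      = (((j + k).choose k : ℝ) / ((N - 1 - (j + k) + k).choose k : ℝ)) *
        ((N.factorial : ℝ) / ((j + k).factorial * (N - 1 - (j + k)).factorial)) := by
    rw [Nat.cast_choose ℝ (by omega : k ≤ j + k),
      Nat.cast_choose ℝ (Nat.le_add_left k (N - 1 - (j + k)))]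
    rw [show j + k - k = j by omega, show N - 1 - (j + k) + k - k = N - 1 - (j + k) by omega]
    have hfac : ∀ p : ℕ, ((p.factorial : ℝ)) ≠ 0 := fun p => by positivity
    field_simp
    rw [show N - 1 - j = k + (N - 1 - (j + k)) by omega]
    ring
  have hsq : (Real.sqrt ((N.factorial : ℝ) / (j.factorial * (N - 1 - j).factorial)) : ℝ)
      = Real.sqrt (((j + k).choose k : ℝ) / ((N - 1 - (j + k) + k).choose k : ℝ)) *
        Real.sqrt ((N.factorial : ℝ) / ((j + k).factorial * (N - 1 - (j + k)).factorial)) := by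
    rw [← Real.sqrt_mul hq0, hrad]
  have hCdiv : (Real.sqrt (CNn N ℏ (⇑a) (j + k) / CNn N ℏ (⇑a) j) : ℝ)
      = Real.sqrt (CNn N ℏ (⇑a) (j + k)) / Real.sqrt (CNn N ℏ (⇑a) j) :=
    Real.sqrt_div (hC (j + k) hm').le _
  have hsj : (Real.sqrt (CNn N ℏ (⇑a) j) : ℂ) ≠ 0 := hsqrt_ne j hj'
  have hsqC : ((Real.sqrt ((N.factorial : ℝ) / (j.factorial * (N - 1 - j).factorial)) : ℝ) : ℂ)
      = ((Real.sqrt (((j + k).choose k : ℝ) / ((N - 1 - (j + k) + k).choose k : ℝ)) : ℝ) : ℂ) *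
        ((Real.sqrt ((N.factorial : ℝ) / ((j + k).factorial * (N - 1 - (j + k)).factorial)) : ℝ) : ℂ) := by
    rw [hsq, Complex.ofReal_mul]
  have hCdivC : ((Real.sqrt (CNn N ℏ (⇑a) (j + k) / CNn N ℏ (⇑a) j) : ℝ) : ℂ)
      = ((Real.sqrt (CNn N ℏ (⇑a) (j + k)) : ℝ) : ℂ) /
        ((Real.sqrt (CNn N ℏ (⇑a) j) : ℝ) : ℂ) := by
    rw [hCdiv, Complex.ofReal_div]
  simp only [Pi.smul_apply, psiNn, smul_eq_mul, hc, phiN, map_mul, Complex.conj_ofReal,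
    map_pow, hCdivC, hsqC, Nat.add_sub_cancel, Nat.cast_add, add_sub_cancel_right]
  exact scalar_id _ _ _ _ _ _ _ _ j k hcz hsj
end
end
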